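/- If A is an n × n doubly stochastic matrix (nonnegative entries, all row sums and all column sums equal to 1), then sm(A) = 1/n. -/
import Mathlib


open scoped BigOperators Kronecker
open Matrix

/-- The permanent of a square real matrix. -/
noncomputable def perm {ι : Type*} [Fintype ι] [DecidableEq ι] (A : Matrix ι ι ℝ) : ℝ :=
  ∑ σ : Equiv.Perm ι, ∏ i, A i (σ i)

/-- The permanental mean `pm A = (per A / n!) ^ (1/n)`. -/
noncomputable def pm {ι : Type*} [Fintype ι] [DecidableEq ι] (A : Matrix ι ι ℝ) : ℝ :=
  (perm A / (Nat.factorial (Fintype.card ι) : ℝ)) ^ ((Fintype.card ι : ℝ)⁻¹)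

/-- The geometric mean of the entries of a vector. -/
noncomputable def gmVec {ι : Type*} [Fintype ι] (v : ι → ℝ) : ℝ :=
  (∏ i, v i) ^ ((Fintype.card ι : ℝ)⁻¹)

/-- The set of values whose infimum defines the scaling mean. -/
noncomputable def smSet {ι κ : Type*} [Fintype ι] [Fintype κ] (A : Matrix ι κ ℝ) : Set ℝ :=
  {r : ℝ | ∃ x : ι → ℝ, ∃ y : κ → ℝ, (∀ i, 0 < x i) ∧ (∀ j, 0 < y j) ∧
    r = (∑ i, ∑ j, x i * A i j * y j) / (gmVec x * gmVec y)}

/-- The scaling mean `sm A = (1/(mn)) · inf over positive vectors x, y of xᵀAy/(gm x · gm y)`. -/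
noncomputable def sm {ι κ : Type*} [Fintype ι] [Fintype κ] (A : Matrix ι κ ℝ) : ℝ :=
  ((Fintype.card ι : ℝ) * (Fintype.card κ : ℝ))⁻¹ * sInf (smSet A)

/-- The scaling mean of a doubly stochastic `n × n` matrix equals `1/n`. -/
theorem stmt_6 {n : ℕ} (A : Matrix (Fin n) (Fin n) ℝ)
    (h0 : ∀ i j, 0 ≤ A i j)
    (hrow : ∀ i, ∑ j, A i j = 1) (hcol : ∀ j, ∑ i, A i j = 1) :
    sm A = (n : ℝ)⁻¹ := by
  rcases Nat.eq_zero_or_pos n with hn | hn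
  · subst hn; simp [sm]
  have hn' : (0:ℝ) < n := by exact_mod_cast hn
  have gmpos : ∀ v : Fin n → ℝ, (∀ i, 0 < v i) → 0 < gmVec v := fun v hv =>
    Real.rpow_pos_of_pos (Finset.prod_pos fun i _ => hv i) _
  have hmem : (n:ℝ) ∈ smSet A := by
    refine ⟨fun _ => 1, fun _ => 1, fun _ => one_pos, fun _ => one_pos, ?_⟩
    simp [gmVec, hrow, Real.one_rpow]
  have hlb : ∀ r ∈ smSet A, (n:ℝ) ≤ r := by
    rintro r ⟨x, y, hx, hy, rfl⟩
    have hgx := gmpos x hx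
    have hgy := gmpos y hy
    rw [le_div_iff₀ (mul_pos hgx hgy)]
    have amgm := Real.geom_mean_le_arith_mean_weighted Finset.univ
      (fun p : Fin n × Fin n => A p.1 p.2 / n)
      (fun p : Fin n × Fin n => x p.1 * y p.2)
      (fun p _ => div_nonneg (h0 p.1 p.2) hn'.le)
      (by
        rw [← Finset.sum_div, div_eq_one_iff_eq (ne_of_gt hn'), Fintype.sum_prod_type]
        simp [hrow])
      (fun p _ => (mul_pos (hx p.1) (hy p.2)).le)
    have e1 : (∏ i, ∏ j, x i ^ (A i j / n)) = gmVec x := by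
      have h1 : ∀ i : Fin n, (∏ j, x i ^ (A i j / n)) = x i ^ ((n:ℝ)⁻¹) := by
        intro i
        rw [← Real.rpow_sum_of_pos (hx i), ← Finset.sum_div, hrow i, one_div]
      rw [Finset.prod_congr rfl fun i _ => h1 i,
        Real.finset_prod_rpow _ _ (fun i _ => (hx i).le), gmVec]
      simp [Fintype.card_fin]
    have e2 : (∏ i, ∏ j, y j ^ (A i j / n)) = gmVec y := by
      rw [Finset.prod_comm]
      have h1 : ∀ j : Fin n, (∏ i, y j ^ (A i j / n)) = y j ^ ((n:ℝ)⁻¹) := by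
        intro j
        rw [← Real.rpow_sum_of_pos (hy j), ← Finset.sum_div, hcol j, one_div]
      rw [Finset.prod_congr rfl fun j _ => h1 j,
        Real.finset_prod_rpow _ _ (fun j _ => (hy j).le), gmVec]
      simp [Fintype.card_fin]
    have eL : (∏ p : Fin n × Fin n, (x p.1 * y p.2) ^ (A p.1 p.2 / n))
        = gmVec x * gmVec y := by
      rw [Fintype.prod_prod_type]
      calc (∏ i, ∏ j, (x i * y j) ^ (A i j / n))
          = ∏ i, ∏ j, x i ^ (A i j / n) * y j ^ (A i j / n) := by
            refine Finset.prod_congr rfl fun i _ => Finset.prod_congr rfl fun j _ => ?_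
            exact Real.mul_rpow (hx i).le (hy j).le
        _ = (∏ i, ∏ j, x i ^ (A i j / n)) * (∏ i, ∏ j, y j ^ (A i j / n)) := by
            simp [Finset.prod_mul_distrib]
        _ = gmVec x * gmVec y := by rw [e1, e2]
    have eR : (∑ p : Fin n × Fin n, (A p.1 p.2 / n) * (x p.1 * y p.2))
        = (∑ i, ∑ j, x i * A i j * y j) / n := by
      rw [Fintype.sum_prod_type, Finset.sum_div]
      refine Finset.sum_congr rfl fun i _ => ?_
      rw [Finset.sum_div]
      refine Finset.sum_congr rfl fun j _ => by ring
    rw [eL, eR] at amgm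
    calc (n:ℝ) * (gmVec x * gmVec y) ≤ n * ((∑ i, ∑ j, x i * A i j * y j) / n) :=
          by exact mul_le_mul_of_nonneg_left amgm hn'.le
      _ = ∑ i, ∑ j, x i * A i j * y j := by field_simp
  have hinf : sInf (smSet A) = n :=
    le_antisymm (csInf_le ⟨n, hlb⟩ hmem) (le_csInf ⟨_, hmem⟩ hlb)
  rw [sm, hinf]
  simp only [Fintype.card_fin]
  field_simp
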